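/- arXiv:0909.3017 — 7 statements merged into one kernel-verified Lean document; each statement's English description precedes it below -/
import Mathlib

section
/- (Derivative Lemma, first order.) Let A, B : ℝ → ℝ → ℂ be C² functions of (x,k) (written A(x;k), B(x;k)), let k : ℝ → ℝ be differentiable, and suppose the Wronskian W(x) = A(x;k(x))·∂ₓB(x;k(x)) − ∂ₓA(x;k(x))·B(x;k(x)) is nonzero for all x in an interval I. Let a, b : ℝ → ℂ be differentiable on I and satisfy the envelope system a'(x) = u₁₁(x)a(x) + u₁₂(x)b(x), b'(x) = u₂₁(x)a(x) + u₂₂(x)b(x), where u₁₁ = k'(∂ₓₖA·B − ∂ₖA·∂ₓB)/W, u₁₂ = k'(∂ₓₖB·B − ∂ₖB·∂ₓB)/W, u₂₁ = k'(∂ₖA·∂ₓA − ∂ₓₖA·A)/W, u₂₂ = k'(∂ₓA·∂ₖB − A·∂ₓₖB)/W, all partial derivatives evaluated at (x, k(x)). Then the function f(x) = a(x)A(x;k(x)) + b(x)B(x;k(x)) is differentiable on I with f'(x) = a(x)·∂ₓA(x;k(x)) + b(x)·∂ₓB(x;k(x)). -/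
/-- Partial derivative in `x` of a basis function `F(x;k)`. -/
noncomputable def pdx (F : ℝ → ℝ → ℂ) (x k : ℝ) : ℂ := deriv (fun x' => F x' k) x

/-- Partial derivative in `k` of a basis function `F(x;k)`. -/
noncomputable def pdk (F : ℝ → ℝ → ℂ) (x k : ℝ) : ℂ := deriv (fun k' => F x k') k

/-- Mixed partial derivative: the `k`-derivative of the `x`-derivative of `F(x;k)`. -/
noncomputable def pdxk (F : ℝ → ℝ → ℂ) (x k : ℝ) : ℂ := deriv (fun k' => pdx F x k') k

/-- Second partial derivative in `x` of a basis function `F(x;k)`. -/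
noncomputable def pdxx (F : ℝ → ℝ → ℂ) (x k : ℝ) : ℂ := deriv (fun x' => pdx F x' k) x

/-- The Wronskian `W(x;k) = A ∂ₓB − ∂ₓA B` of the basis functions. -/
noncomputable def wron (A B : ℝ → ℝ → ℂ) (x k : ℝ) : ℂ :=
  A x k * pdx B x k - pdx A x k * B x k

/-- Kernel matrix entry `u₁₁ = k'(∂ₓₖA·B − ∂ₖA·∂ₓB)/W`, evaluated at `(x, k(x))`. -/
noncomputable def u11 (A B : ℝ → ℝ → ℂ) (k : ℝ → ℝ) (x : ℝ) : ℂ :=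
  (Complex.ofReal (deriv k x)) * (pdxk A x (k x) * B x (k x) - pdk A x (k x) * pdx B x (k x)) /
    wron A B x (k x)

/-- Kernel matrix entry `u₁₂ = k'(∂ₓₖB·B − ∂ₖB·∂ₓB)/W`, evaluated at `(x, k(x))`. -/
noncomputable def u12 (A B : ℝ → ℝ → ℂ) (k : ℝ → ℝ) (x : ℝ) : ℂ :=
  (Complex.ofReal (deriv k x)) * (pdxk B x (k x) * B x (k x) - pdk B x (k x) * pdx B x (k x)) /
    wron A B x (k x)

/-- Kernel matrix entry `u₂₁ = k'(∂ₖA·∂ₓA − ∂ₓₖA·A)/W`, evaluated at `(x, k(x))`. -/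
noncomputable def u21 (A B : ℝ → ℝ → ℂ) (k : ℝ → ℝ) (x : ℝ) : ℂ :=
  (Complex.ofReal (deriv k x)) * (pdk A x (k x) * pdx A x (k x) - pdxk A x (k x) * A x (k x)) /
    wron A B x (k x)

/-- Kernel matrix entry `u₂₂ = k'(∂ₓA·∂ₖB − A·∂ₓₖB)/W`, evaluated at `(x, k(x))`. -/
noncomputable def u22 (A B : ℝ → ℝ → ℂ) (k : ℝ → ℝ) (x : ℝ) : ℂ :=
  (Complex.ofReal (deriv k x)) * (pdx A x (k x) * pdk B x (k x) - A x (k x) * pdxk B x (k x)) /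
    wron A B x (k x)

lemma chain_deriv_aux (F : ℝ → ℝ → ℂ)
    (hF : ContDiff ℝ 2 fun p : ℝ × ℝ => F p.1 p.2)
    (k : ℝ → ℝ) (hk : Differentiable ℝ k) (x : ℝ) :
    HasDerivAt (fun y => F y (k y))
      (pdx F x (k x) + (Complex.ofReal (deriv k x)) * pdk F x (k x)) x := by
  have hd : DifferentiableAt ℝ (fun p : ℝ × ℝ => F p.1 p.2) (x, k x) :=
    (hF.differentiable (by norm_num)).differentiableAt
  set L := fderiv ℝ (fun p : ℝ × ℝ => F p.1 p.2) (x, k x) with hLdef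
  have hL := hd.hasFDerivAt
  have h1 : HasDerivAt (fun x' => F x' (k x)) (L (1, 0)) x := by
    have hcurve : HasDerivAt (fun x' : ℝ => (x', k x)) ((1 : ℝ), (0 : ℝ)) x :=
      (hasDerivAt_id x).prodMk (hasDerivAt_const x (k x))
    exact hL.comp_hasDerivAt x hcurve
  have h2 : HasDerivAt (fun k' => F x k') (L (0, 1)) (k x) := by
    have hcurve : HasDerivAt (fun k' : ℝ => (x, k')) ((0 : ℝ), (1 : ℝ)) (k x) :=
      (hasDerivAt_const (k x) x).prodMk (hasDerivAt_id (k x))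
    exact hL.comp_hasDerivAt (k x) hcurve
  have hpx : pdx F x (k x) = L (1, 0) := h1.deriv
  have hpk : pdk F x (k x) = L (0, 1) := h2.deriv
  have hcurve : HasDerivAt (fun y : ℝ => (y, k y)) ((1 : ℝ), deriv k x) x :=
    (hasDerivAt_id x).prodMk (hk x).hasDerivAt
  have hmain : HasDerivAt (fun y => F y (k y)) (L (1, deriv k x)) x :=
    by have := hL.comp_hasDerivAt x hcurve; exact this
  have heq : L (1, deriv k x) = pdx F x (k x) + (Complex.ofReal (deriv k x)) * pdk F x (k x) := by
    have : ((1 : ℝ), deriv k x) = (1, 0) + deriv k x • ((0 : ℝ), (1 : ℝ)) := by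
      simp [Prod.ext_iff]
    rw [this, map_add, map_smul, hpx, hpk, Complex.real_smul]
  rw [heq] at hmain
  exact hmain

/-- Derivative Lemma, first order: if the envelope coefficients `a, b`
satisfy the differential transfer matrix (envelope) system, then
`f(x) = a(x)A(x;k(x)) + b(x)B(x;k(x))` is differentiable with
`f'(x) = a(x)∂ₓA(x;k(x)) + b(x)∂ₓB(x;k(x))`. -/
theorem derivative_lemma_first_order
    (A B : ℝ → ℝ → ℂ)
    (hA : ContDiff ℝ 2 fun p : ℝ × ℝ => A p.1 p.2)
    (hB : ContDiff ℝ 2 fun p : ℝ × ℝ => B p.1 p.2)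
    (k : ℝ → ℝ) (hk : Differentiable ℝ k)
    (I : Set ℝ) (hI : IsOpen I)
    (hW : ∀ x ∈ I, wron A B x (k x) ≠ 0)
    (a b : ℝ → ℂ)
    (ha : ∀ x ∈ I, HasDerivAt a (u11 A B k x * a x + u12 A B k x * b x) x)
    (hb : ∀ x ∈ I, HasDerivAt b (u21 A B k x * a x + u22 A B k x * b x) x) :
    ∀ x ∈ I, HasDerivAt (fun y => a y * A y (k y) + b y * B y (k y))
      (a x * pdx A x (k x) + b x * pdx B x (k x)) x := by
  intro x hx
  have hAx := chain_deriv_aux A hA k hk x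
  have hBx := chain_deriv_aux B hB k hk x
  have hf := (((ha x hx).mul hAx).add ((hb x hx).mul hBx))
  refine HasDerivAt.congr_deriv (f := fun y => a y * A y (k y) + b y * B y (k y)) hf ?_
  symm
  have hW0 := hW x hx
  simp only [u11, u12, u21, u22]
  have hwr : wron A B x (k x) = A x (k x) * pdx B x (k x) - pdx A x (k x) * B x (k x) := rfl
  field_simp
  rw [hwr]
  ring
end

section
/- (Derivative Lemma, second order.) Let A, B : ℝ → ℝ → ℂ be C³ functions of (x,k), let k : ℝ → ℝ be differentiable, and suppose the Wronskian W(x) = A(x;k(x))·∂ₓB(x;k(x)) − ∂ₓA(x;k(x))·B(x;k(x)) is nonzero for all x in an interval I. Let a, b : ℝ → ℂ be differentiable on I and satisfy the envelope system a' = u₁₁a + u₁₂b, b' = u₂₁a + u₂₂b with the kernel matrix entries built from A, B, k. Then f(x) = a(x)A(x;k(x)) + b(x)B(x;k(x)) is twice differentiable on I with f''(x) = a(x)·∂ₓₓA(x;k(x)) + b(x)·∂ₓₓB(x;k(x)). -/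
lemma pdx_eq_fderiv (F : ℝ → ℝ → ℂ)
    (hF : Differentiable ℝ (fun p : ℝ × ℝ => F p.1 p.2)) (x k : ℝ) :
    pdx F x k = fderiv ℝ (fun p : ℝ × ℝ => F p.1 p.2) (x, k) (1, 0) := by
  have hφ : HasDerivAt (fun x' : ℝ => (x', k)) ((1 : ℝ), (0 : ℝ)) x :=
    HasDerivAt.prodMk (hasDerivAt_id x) (hasDerivAt_const x k)
  have h := (hF (x, k)).hasFDerivAt.comp_hasDerivAt x hφ
  exact h.deriv

lemma pdk_eq_fderiv (F : ℝ → ℝ → ℂ)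
    (hF : Differentiable ℝ (fun p : ℝ × ℝ => F p.1 p.2)) (x k : ℝ) :
    pdk F x k = fderiv ℝ (fun p : ℝ × ℝ => F p.1 p.2) (x, k) (0, 1) := by
  have hφ : HasDerivAt (fun k' : ℝ => (x, k')) ((0 : ℝ), (1 : ℝ)) k :=
    HasDerivAt.prodMk (hasDerivAt_const k x) (hasDerivAt_id k)
  have h := (hF (x, k)).hasFDerivAt.comp_hasDerivAt k hφ
  exact h.deriv

/-- Chain rule along `y ↦ (y, k y)`. -/
lemma hasDerivAt_comp_k (F : ℝ → ℝ → ℂ)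
    (hF : Differentiable ℝ (fun p : ℝ × ℝ => F p.1 p.2))
    (k : ℝ → ℝ) (hk : Differentiable ℝ k) (x : ℝ) :
    HasDerivAt (fun y => F y (k y))
      (pdx F x (k x) + (Complex.ofReal (deriv k x)) * pdk F x (k x)) x := by
  have hφ : HasDerivAt (fun y : ℝ => (y, k y)) ((1 : ℝ), deriv k x) x :=
    HasDerivAt.prodMk (hasDerivAt_id x) ((hk x).hasDerivAt)
  have h := (hF (x, k x)).hasFDerivAt.comp_hasDerivAt x hφ
  have key : fderiv ℝ (fun p : ℝ × ℝ => F p.1 p.2) (x, k x) ((1 : ℝ), deriv k x)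
      = pdx F x (k x) + (Complex.ofReal (deriv k x)) * pdk F x (k x) := by
    have : ((1 : ℝ), deriv k x) = ((1 : ℝ), (0:ℝ)) + (deriv k x) • ((0:ℝ), (1:ℝ)) := by
      simp [Prod.ext_iff]
    rw [this, map_add, map_smul, pdx_eq_fderiv F hF, pdk_eq_fderiv F hF, Complex.real_smul]
  exact key ▸ h

lemma contDiff_pdx (F : ℝ → ℝ → ℂ) {n : WithTop ℕ∞}
    (hF : ContDiff ℝ (n + 1) (fun p : ℝ × ℝ => F p.1 p.2)) :
    ContDiff ℝ n (fun p : ℝ × ℝ => pdx F p.1 p.2) := by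
  have hd : Differentiable ℝ (fun p : ℝ × ℝ => F p.1 p.2) :=
    hF.differentiable (by simp)
  have : (fun p : ℝ × ℝ => pdx F p.1 p.2)
      = fun p => fderiv ℝ (fun p : ℝ × ℝ => F p.1 p.2) p (1, 0) := by
    funext p
    exact pdx_eq_fderiv F hd p.1 p.2
  rw [this]
  exact (hF.fderiv_right le_rfl).clm_apply contDiff_const

/-- Generic envelope differentiation step. -/
lemma step_main (A B P Q : ℝ → ℝ → ℂ)
    (hP : Differentiable ℝ (fun p : ℝ × ℝ => P p.1 p.2))
    (hQ : Differentiable ℝ (fun p : ℝ × ℝ => Q p.1 p.2))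
    (k : ℝ → ℝ) (hk : Differentiable ℝ k)
    (a b : ℝ → ℂ) (x : ℝ)
    (ha : HasDerivAt a (u11 A B k x * a x + u12 A B k x * b x) x)
    (hb : HasDerivAt b (u21 A B k x * a x + u22 A B k x * b x) x)
    (hid1 : u11 A B k x * P x (k x) + u21 A B k x * Q x (k x)
      = -((Complex.ofReal (deriv k x)) * pdk P x (k x)))
    (hid2 : u12 A B k x * P x (k x) + u22 A B k x * Q x (k x)
      = -((Complex.ofReal (deriv k x)) * pdk Q x (k x))) :
    HasDerivAt (fun y => a y * P y (k y) + b y * Q y (k y))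
      (a x * pdx P x (k x) + b x * pdx Q x (k x)) x := by
  have h := (ha.mul (hasDerivAt_comp_k P hP k hk x)).add
    (hb.mul (hasDerivAt_comp_k Q hQ k hk x))
  refine h.congr_deriv ?_
  linear_combination (a x) * hid1 + (b x) * hid2

lemma env_id1 (A B : ℝ → ℝ → ℂ) (k : ℝ → ℝ) (x : ℝ) (hW : wron A B x (k x) ≠ 0) :
    u11 A B k x * A x (k x) + u21 A B k x * B x (k x)
      = -((Complex.ofReal (deriv k x)) * pdk A x (k x)) := by
  unfold u11 u21
  unfold wron at hW ⊢
  rw [div_mul_eq_mul_div, div_mul_eq_mul_div, ← add_div, div_eq_iff hW]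
  ring

lemma env_id2 (A B : ℝ → ℝ → ℂ) (k : ℝ → ℝ) (x : ℝ) (hW : wron A B x (k x) ≠ 0) :
    u12 A B k x * A x (k x) + u22 A B k x * B x (k x)
      = -((Complex.ofReal (deriv k x)) * pdk B x (k x)) := by
  unfold u12 u22
  unfold wron at hW ⊢
  rw [div_mul_eq_mul_div, div_mul_eq_mul_div, ← add_div, div_eq_iff hW]
  ring

lemma env_id3 (A B : ℝ → ℝ → ℂ) (k : ℝ → ℝ) (x : ℝ) (hW : wron A B x (k x) ≠ 0) :
    u11 A B k x * pdx A x (k x) + u21 A B k x * pdx B x (k x)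
      = -((Complex.ofReal (deriv k x)) * pdxk A x (k x)) := by
  unfold u11 u21
  unfold wron at hW ⊢
  rw [div_mul_eq_mul_div, div_mul_eq_mul_div, ← add_div, div_eq_iff hW]
  ring

lemma env_id4 (A B : ℝ → ℝ → ℂ) (k : ℝ → ℝ) (x : ℝ) (hW : wron A B x (k x) ≠ 0) :
    u12 A B k x * pdx A x (k x) + u22 A B k x * pdx B x (k x)
      = -((Complex.ofReal (deriv k x)) * pdxk B x (k x)) := by
  unfold u12 u22
  unfold wron at hW ⊢
  rw [div_mul_eq_mul_div, div_mul_eq_mul_div, ← add_div, div_eq_iff hW]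
  ring

/-- Derivative Lemma, second order: if the envelope coefficients `a, b`
satisfy the differential transfer matrix (envelope) system, then
`f(x) = a(x)A(x;k(x)) + b(x)B(x;k(x))` is twice differentiable with
`f''(x) = a(x)∂ₓₓA(x;k(x)) + b(x)∂ₓₓB(x;k(x))`. -/
theorem derivative_lemma_second_order
    (A B : ℝ → ℝ → ℂ)
    (hA : ContDiff ℝ 3 fun p : ℝ × ℝ => A p.1 p.2)
    (hB : ContDiff ℝ 3 fun p : ℝ × ℝ => B p.1 p.2)
    (k : ℝ → ℝ) (hk : Differentiable ℝ k)
    (I : Set ℝ) (hI : IsOpen I)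
    (hW : ∀ x ∈ I, wron A B x (k x) ≠ 0)
    (a b : ℝ → ℂ)
    (ha : ∀ x ∈ I, HasDerivAt a (u11 A B k x * a x + u12 A B k x * b x) x)
    (hb : ∀ x ∈ I, HasDerivAt b (u21 A B k x * a x + u22 A B k x * b x) x) :
    ∀ x ∈ I, HasDerivAt (deriv (fun y => a y * A y (k y) + b y * B y (k y)))
      (a x * pdxx A x (k x) + b x * pdxx B x (k x)) x := by
  have hAd : Differentiable ℝ (fun p : ℝ × ℝ => A p.1 p.2) := hA.differentiable (by norm_num)
  have hBd : Differentiable ℝ (fun p : ℝ × ℝ => B p.1 p.2) := hB.differentiable (by norm_num)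
  have hA3 : ContDiff ℝ ((2 : WithTop ℕ∞) + 1) (fun p : ℝ × ℝ => A p.1 p.2) := by
    exact hA
  have hB3 : ContDiff ℝ ((2 : WithTop ℕ∞) + 1) (fun p : ℝ × ℝ => B p.1 p.2) := by
    exact hB
  have hpAd : Differentiable ℝ (fun p : ℝ × ℝ => pdx A p.1 p.2) :=
    (contDiff_pdx A hA3).differentiable (by norm_num)
  have hpBd : Differentiable ℝ (fun p : ℝ × ℝ => pdx B p.1 p.2) :=
    (contDiff_pdx B hB3).differentiable (by norm_num)
  -- first derivative
  have step1 : ∀ y ∈ I, HasDerivAt (fun y => a y * A y (k y) + b y * B y (k y))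
      (a y * pdx A y (k y) + b y * pdx B y (k y)) y := fun y hy =>
    step_main A B A B hAd hBd k hk a b y (ha y hy) (hb y hy)
      (env_id1 A B k y (hW y hy)) (env_id2 A B k y (hW y hy))
  -- second derivative of the pdx-envelope
  intro x hx
  have step2 : HasDerivAt (fun y => a y * pdx A y (k y) + b y * pdx B y (k y))
      (a x * pdxx A x (k x) + b x * pdxx B x (k x)) x :=
    step_main A B (pdx A) (pdx B) hpAd hpBd k hk a b x (ha x hx) (hb x hx)
      (env_id3 A B k x (hW x hx)) (env_id4 A B k x (hW x hx))
  refine step2.congr_of_eventuallyEq ?_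
  filter_upwards [hI.mem_nhds hx] with y hy
  exact (step1 y hy).deriv
end

section
/- Let k : ℝ → ℝ be differentiable with k(x) ≠ 0. For the basis functions A(x;k) = exp(−i x k) and B(x;k) = exp(+i x k) of the wave equation, the Wronskian is W(x; k(x)) = 2 i k(x), and the kernel matrix U(x) built from A, B, k equals (k'(x)/(2k(x))) times the 2×2 matrix with entries [−1 + 2ix k(x), exp(+2ix k(x)); exp(−2ix k(x)), −1 − 2ix k(x)]. -/
lemma hd_exp' (c : ℂ) (t : ℝ) :
    HasDerivAt (fun t : ℝ => Complex.exp (c * t)) (c * Complex.exp (c * t)) t := by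
  have h : HasDerivAt (fun t : ℝ => (t : ℂ)) 1 t := Complex.ofRealCLM.hasDerivAt
  simpa [mul_comm] using (h.const_mul c).cexp

lemma deriv_exp_mul' (c : ℂ) (t : ℝ) :
    deriv (fun t : ℝ => Complex.exp (c * t)) t = c * Complex.exp (c * t) :=
  (hd_exp' c t).deriv

lemma deriv_mul_exp' (c d : ℂ) (t : ℝ) :
    deriv (fun t : ℝ => d * (t : ℂ) * Complex.exp (c * t)) t
      = d * Complex.exp (c * t) + d * (t : ℂ) * (c * Complex.exp (c * t)) := by
  have h : HasDerivAt (fun t : ℝ => (t : ℂ)) 1 t := Complex.ofRealCLM.hasDerivAt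
  have := ((h.const_mul d).mul (hd_exp' c t)).deriv
  rw [show (fun t : ℝ => d * (t : ℂ) * Complex.exp (c * t)) = (fun y : ℝ => d * (y : ℂ)) * (fun t : ℝ => Complex.exp (c * t)) from rfl, this]; ring

lemma I_pow_three' : Complex.I ^ 3 = -Complex.I := by
  rw [pow_succ, Complex.I_sq]; ring

lemma I_pow_four' : Complex.I ^ 4 = 1 := by
  rw [pow_succ, I_pow_three']; simp [Complex.I_mul_I]

noncomputable def Af : ℝ → ℝ → ℂ := fun x κ : ℝ => Complex.exp (-(Complex.I * x * κ))
noncomputable def Bf : ℝ → ℝ → ℂ := fun x κ : ℝ => Complex.exp (Complex.I * x * κ)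

lemma pdxA (x κ : ℝ) : pdx Af x κ = -(Complex.I * κ) * Complex.exp (-(Complex.I * x * κ)) := by
  unfold pdx Af
  have h : (fun x' : ℝ => Complex.exp (-(Complex.I * x' * κ)))
      = fun x' : ℝ => Complex.exp ((-(Complex.I * κ)) * x') := by funext x'; try ring_nf
  rw [h, deriv_exp_mul']; try ring_nf

lemma pdxB (x κ : ℝ) : pdx Bf x κ = (Complex.I * κ) * Complex.exp (Complex.I * x * κ) := by
  unfold pdx Bf
  have h : (fun x' : ℝ => Complex.exp (Complex.I * x' * κ))
      = fun x' : ℝ => Complex.exp ((Complex.I * κ) * x') := by funext x'; try ring_nf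
  rw [h, deriv_exp_mul']; try ring_nf

lemma pdkA (x κ : ℝ) : pdk Af x κ = -(Complex.I * x) * Complex.exp (-(Complex.I * x * κ)) := by
  unfold pdk Af
  have h : (fun κ' : ℝ => Complex.exp (-(Complex.I * x * κ')))
      = fun κ' : ℝ => Complex.exp ((-(Complex.I * x)) * κ') := by funext κ'; try ring_nf
  rw [h, deriv_exp_mul']; try ring_nf

lemma pdkB (x κ : ℝ) : pdk Bf x κ = (Complex.I * x) * Complex.exp (Complex.I * x * κ) := by
  unfold pdk Bf
  have h : (fun κ' : ℝ => Complex.exp (Complex.I * x * κ'))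
      = fun κ' : ℝ => Complex.exp ((Complex.I * x) * κ') := by funext κ'; try ring_nf
  rw [h, deriv_exp_mul']; try ring_nf

lemma pdxkA (x κ : ℝ) : pdxk Af x κ
    = (-Complex.I - (x : ℂ) * κ) * Complex.exp (-(Complex.I * x * κ)) := by
  unfold pdxk
  have h1 : (fun κ' : ℝ => pdx Af x κ')
      = fun κ' : ℝ => (-Complex.I) * (κ' : ℂ) * Complex.exp ((-(Complex.I * x)) * κ') := by
    funext κ'; rw [pdxA]; try ring_nf
  have h2 : ((-(Complex.I * x)) * κ : ℂ) = -(Complex.I * x * κ) := by ring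
  rw [h1, deriv_mul_exp', h2]
  ring_nf
  simp only [Complex.I_sq, I_pow_three', I_pow_four']
  ring

lemma pdxkB (x κ : ℝ) : pdxk Bf x κ
    = (Complex.I - (x : ℂ) * κ) * Complex.exp (Complex.I * x * κ) := by
  unfold pdxk
  have h1 : (fun κ' : ℝ => pdx Bf x κ')
      = fun κ' : ℝ => (Complex.I) * (κ' : ℂ) * Complex.exp ((Complex.I * x) * κ') := by
    funext κ'; rw [pdxB]; try ring_nf
  have h2 : ((Complex.I * x) * κ : ℂ) = Complex.I * x * κ := by ring
  rw [h1, deriv_mul_exp', h2]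
  ring_nf
  simp only [Complex.I_sq, I_pow_three', I_pow_four']
  ring

/-- For the exponential basis `A(x;k) = exp(−ixk)`, `B(x;k) = exp(+ixk)`
of the wave equation, the Wronskian along `(x, k(x))` is `2ik(x)` and the kernel
matrix equals `(k'(x)/(2k(x)))·[−1+2ixk, e^{+2ixk}; e^{−2ixk}, −1−2ixk]`. -/
theorem wave_equation_kernel_matrix
    (k : ℝ → ℝ) (hk : Differentiable ℝ k) (x : ℝ) (hkx : k x ≠ 0)
    (A B : ℝ → ℝ → ℂ)
    (hAdef : A = fun x κ : ℝ => Complex.exp (-(Complex.I * (x : ℂ) * (κ : ℂ))))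
    (hBdef : B = fun x κ : ℝ => Complex.exp (Complex.I * (x : ℂ) * (κ : ℂ))) :
    wron A B x (k x) = 2 * Complex.I * (k x : ℂ) ∧
    !![u11 A B k x, u12 A B k x; u21 A B k x, u22 A B k x] =
      ((deriv k x : ℝ) / (2 * k x) : ℝ) •
        !![-1 + 2 * Complex.I * (x : ℂ) * (k x : ℂ),
             Complex.exp (2 * Complex.I * (x : ℂ) * (k x : ℂ));
           Complex.exp (-(2 * Complex.I * (x : ℂ) * (k x : ℂ))),
             -1 - 2 * Complex.I * (x : ℂ) * (k x : ℂ)] := by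
  subst hAdef hBdef
  have hABA : (fun x κ : ℝ => Complex.exp (-(Complex.I * (x : ℂ) * (κ : ℂ)))) = Af := rfl
  have hABB : (fun x κ : ℝ => Complex.exp (Complex.I * (x : ℂ) * (κ : ℂ))) = Bf := rfl
  rw [hABA, hABB]
  set E := Complex.exp (Complex.I * x * (k x)) with hE
  have hEne : E ≠ 0 := Complex.exp_ne_zero _
  have hEinv : Complex.exp (-(Complex.I * x * (k x))) = E⁻¹ := by
    rw [hE, ← Complex.exp_neg]
  have hE2 : Complex.exp (2 * Complex.I * x * (k x)) = E * E := by
    rw [hE, ← Complex.exp_add]; try ring_nf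
  have hE2' : Complex.exp (-(2 * Complex.I * x * (k x))) = E⁻¹ * E⁻¹ := by
    rw [hE, ← Complex.exp_neg, ← Complex.exp_add]; try ring_nf
  have hEcomm : Complex.exp (Complex.I * ↑(k x) * ↑x) = E := by rw [hE]; ring_nf
  have hAv : Af x (k x) = E⁻¹ := by rw [Af]; exact hEinv
  have hBv : Bf x (k x) = E := rfl
  have hκC : ((k x : ℂ)) ≠ 0 := Complex.ofReal_ne_zero.mpr hkx
  have hW : wron Af Bf x (k x) = 2 * Complex.I * (k x) := by
    rw [wron, pdxA, pdxB, hAv, hBv, hEinv]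
    field_simp
    ring_nf; rw [hEcomm]; ring
  refine ⟨hW, ?_⟩
  have e11 : u11 Af Bf k x
      = (Complex.ofReal (deriv k x)) / (2 * (k x : ℂ)) * (-1 + 2 * Complex.I * x * (k x)) := by
    rw [u11, hW, pdxkA, pdkA, pdxB, hBv, hEinv]
    field_simp
    ring_nf
    simp only [Complex.I_sq, I_pow_three', I_pow_four', hEcomm, ← hE]
    ring
  have e12 : u12 Af Bf k x
      = (Complex.ofReal (deriv k x)) / (2 * (k x : ℂ)) * (E * E) := by
    rw [u12, hW, pdxkB, pdkB, pdxB, hBv]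
    field_simp
    ring_nf
    simp only [Complex.I_sq, I_pow_three', I_pow_four', hEcomm, ← hE]
    ring
  have e21 : u21 Af Bf k x
      = (Complex.ofReal (deriv k x)) / (2 * (k x : ℂ)) * (E⁻¹ * E⁻¹) := by
    rw [u21, hW, pdxkA, pdkA, pdxA, hAv, hEinv]
    field_simp
    ring_nf
    simp only [Complex.I_sq, I_pow_three', I_pow_four', hEcomm, ← hE]
    ring
  have e22 : u22 Af Bf k x
      = (Complex.ofReal (deriv k x)) / (2 * (k x : ℂ)) * (-1 - 2 * Complex.I * x * (k x)) := by
    rw [u22, hW, pdxkB, pdkB, pdxA, hAv, hEinv]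
    field_simp
    ring_nf
    simp only [Complex.I_sq, I_pow_three', I_pow_four', hEcomm, ← hE]
    ring
  have hcast : ((deriv k x / (2 * k x) : ℝ) : ℂ)
      = (Complex.ofReal (deriv k x)) / (2 * (k x : ℂ)) := by push_cast; ring
  ext i j
  fin_cases i <;> fin_cases j <;>
    simp [e11, e12, e21, e22, hE2, hE2', Complex.real_smul, hcast] <;> ring
end

section
/- Let k : ℝ → ℝ be differentiable with k(x) ≠ 0 on an interval I, and let a, b : ℝ → ℂ be differentiable on I satisfying a'(x) = (k'(x)/(2k(x)))[(−1 + 2ix k(x))·a(x) + exp(+2ix k(x))·b(x)] and b'(x) = (k'(x)/(2k(x)))[exp(−2ix k(x))·a(x) + (−1 − 2ix k(x))·b(x)]. Then the function ψ(x) = a(x)·exp(−i x k(x)) + b(x)·exp(+i x k(x)) satisfies the extended wave equation ψ''(x) + k(x)² ψ(x) = 0 on I. -/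
/-- If the envelope coefficients `a, b` satisfy the differential
transfer matrix system of the wave equation with exponential basis, then
`ψ(x) = a(x)e^{−ixk(x)} + b(x)e^{+ixk(x)}` solves the extended wave equation
`ψ'' + k(x)²ψ = 0` on `I`. -/
theorem wave_equation_DTMM_solution
    (k : ℝ → ℝ) (hk : Differentiable ℝ k)
    (I : Set ℝ) (hI : IsOpen I) (hk0 : ∀ x ∈ I, k x ≠ 0)
    (a b : ℝ → ℂ)
    (ha : ∀ x ∈ I, HasDerivAt a
      (((deriv k x : ℝ) / (2 * k x) : ℝ) *
        ((-1 + 2 * Complex.I * (x : ℂ) * (k x : ℂ)) * a x +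
          Complex.exp (2 * Complex.I * (x : ℂ) * (k x : ℂ)) * b x)) x)
    (hb : ∀ x ∈ I, HasDerivAt b
      (((deriv k x : ℝ) / (2 * k x) : ℝ) *
        (Complex.exp (-(2 * Complex.I * (x : ℂ) * (k x : ℂ))) * a x +
          (-1 - 2 * Complex.I * (x : ℂ) * (k x : ℂ)) * b x)) x) :
    ∀ x ∈ I,
      deriv (deriv (fun y => a y * Complex.exp (-(Complex.I * (y : ℂ) * (k y : ℂ))) +
        b y * Complex.exp (Complex.I * (y : ℂ) * (k y : ℂ)))) x +
      (k x : ℂ) ^ 2 * (a x * Complex.exp (-(Complex.I * (x : ℂ) * (k x : ℂ))) +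
        b x * Complex.exp (Complex.I * (x : ℂ) * (k x : ℂ))) = 0 := by
  intro x hx
  set ψ : ℝ → ℂ := fun y => a y * Complex.exp (-(Complex.I * (y : ℂ) * (k y : ℂ))) +
      b y * Complex.exp (Complex.I * (y : ℂ) * (k y : ℂ)) with hψdef
  set φ : ℝ → ℂ := fun y => -Complex.I * (k y : ℂ) *
      (a y * Complex.exp (-(Complex.I * (y : ℂ) * (k y : ℂ))) -
        b y * Complex.exp (Complex.I * (y : ℂ) * (k y : ℂ))) with hφdef
  -- derivative of the phase
  have hK : ∀ y : ℝ, HasDerivAt (fun t : ℝ => Complex.I * (t : ℂ) * (k t : ℂ))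
      (Complex.I * ((k y : ℂ) + (y : ℂ) * (deriv k y : ℝ))) y := by
    intro y
    have h1 : HasDerivAt (fun t : ℝ => (t : ℂ)) 1 y := (hasDerivAt_id y).ofReal_comp
    have h2 : HasDerivAt (fun t : ℝ => ((k t : ℝ) : ℂ)) ((deriv k y : ℝ) : ℂ) y :=
      ((hk y).hasDerivAt).ofReal_comp
    have h3 := (h1.mul h2).const_mul Complex.I
    have heq : (fun t : ℝ => Complex.I * ((t : ℂ) * (k t : ℂ))) =
        fun t : ℝ => Complex.I * (t : ℂ) * (k t : ℂ) := by
      funext t; ring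
    simp only [Pi.mul_apply] at h3
    rw [heq] at h3
    refine h3.congr_deriv ?_
    ring
  -- Step 1: ψ has derivative φ on I
  have key : ∀ y ∈ I, HasDerivAt ψ (φ y) y := by
    intro y hy
    have hKy := hK y
    have hEm : HasDerivAt (fun t : ℝ => Complex.exp (-(Complex.I * (t : ℂ) * (k t : ℂ))))
        (Complex.exp (-(Complex.I * (y : ℂ) * (k y : ℂ))) *
          (-(Complex.I * ((k y : ℂ) + (y : ℂ) * (deriv k y : ℝ))))) y := hKy.neg.cexp
    have hEp : HasDerivAt (fun t : ℝ => Complex.exp (Complex.I * (t : ℂ) * (k t : ℂ)))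
        (Complex.exp (Complex.I * (y : ℂ) * (k y : ℂ)) *
          (Complex.I * ((k y : ℂ) + (y : ℂ) * (deriv k y : ℝ)))) y := hKy.cexp
    have h := ((ha y hy).mul hEm).add ((hb y hy).mul hEp)
    refine h.congr_deriv ?_
    symm
    simp only [hφdef]
    set e := Complex.exp (Complex.I * (y : ℂ) * (k y : ℂ)) with he
    set f := Complex.exp (-(Complex.I * (y : ℂ) * (k y : ℂ))) with hf
    set r := (((deriv k y / (2 * k y) : ℝ)) : ℂ) with hrdef
    have hef : e * f = 1 := by
      rw [he, hf, ← Complex.exp_add]; simp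
    have hu : Complex.exp (2 * Complex.I * (y : ℂ) * (k y : ℂ)) = e * e := by
      rw [he, ← Complex.exp_add]; ring_nf
    have hw : Complex.exp (-(2 * Complex.I * (y : ℂ) * (k y : ℂ))) = f * f := by
      rw [hf, ← Complex.exp_add]; ring_nf
    have hr : 2 * ((k y : ℝ) : ℂ) * r = ((deriv k y : ℝ) : ℂ) := by
      rw [hrdef]
      push_cast
      field_simp [hk0 y hy]
    rw [hu, hw]
    linear_combination (-(r * (a y * f + b y * e))) * hef +
      (Complex.I * (y : ℂ) * (b y * e - a y * f)) * hr
  -- Step 2: φ has derivative -(k x)^2 * ψ x at x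
  have hkc : HasDerivAt (fun t : ℝ => ((k t : ℝ) : ℂ)) ((deriv k x : ℝ) : ℂ) x :=
    ((hk x).hasDerivAt).ofReal_comp
  have hKx := hK x
  have hEm : HasDerivAt (fun t : ℝ => Complex.exp (-(Complex.I * (t : ℂ) * (k t : ℂ))))
      (Complex.exp (-(Complex.I * (x : ℂ) * (k x : ℂ))) *
        (-(Complex.I * ((k x : ℂ) + (x : ℂ) * (deriv k x : ℝ))))) x := hKx.neg.cexp
  have hEp : HasDerivAt (fun t : ℝ => Complex.exp (Complex.I * (t : ℂ) * (k t : ℂ)))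
      (Complex.exp (Complex.I * (x : ℂ) * (k x : ℂ)) *
        (Complex.I * ((k x : ℂ) + (x : ℂ) * (deriv k x : ℝ)))) x := hKx.cexp
  have hφ' : HasDerivAt φ (-(k x : ℂ) ^ 2 * ψ x) x := by
    have h := ((hkc.const_mul (-Complex.I)).mul
      (((ha x hx).mul hEm).sub ((hb x hx).mul hEp)))
    refine h.congr_deriv ?_
    symm
    simp only [hψdef, Pi.mul_apply, Pi.sub_apply]
    set e := Complex.exp (Complex.I * (x : ℂ) * (k x : ℂ)) with he
    set f := Complex.exp (-(Complex.I * (x : ℂ) * (k x : ℂ))) with hf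
    set r := (((deriv k x / (2 * k x) : ℝ)) : ℂ) with hrdef
    have hef : e * f = 1 := by
      rw [he, hf, ← Complex.exp_add]; simp
    have hu : Complex.exp (2 * Complex.I * (x : ℂ) * (k x : ℂ)) = e * e := by
      rw [he, ← Complex.exp_add]; ring_nf
    have hw : Complex.exp (-(2 * Complex.I * (x : ℂ) * (k x : ℂ))) = f * f := by
      rw [hf, ← Complex.exp_add]; ring_nf
    have hr : 2 * ((k x : ℝ) : ℂ) * r = ((deriv k x : ℝ) : ℂ) := by
      rw [hrdef]
      push_cast
      field_simp [hk0 x hx]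
    have hI2 : Complex.I ^ 2 = -1 := Complex.I_sq
    rw [hu, hw]
    linear_combination (Complex.I * ((k x : ℝ) : ℂ) * r * (b x * e - a x * f)) * hef +
      (-(x : ℂ) * ((k x : ℝ) : ℂ) * (a x * f + b x * e) - Complex.I * a x * f +
        Complex.I * b x * e) * hr +
      (((k x : ℝ) : ℂ) * (a x * f + b x * e) *
        (2 * (x : ℂ) * ((k x : ℝ) : ℂ) * r - ((k x : ℝ) : ℂ) -
          (x : ℂ) * ((deriv k x : ℝ) : ℂ))) * hI2
  -- Step 3: conclude
  have hev : deriv ψ =ᶠ[nhds x] φ :=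
    Filter.eventuallyEq_of_mem (hI.mem_nhds hx) (fun y hy => (key y hy).deriv)
  rw [hev.deriv_eq, hφ'.deriv]
  ring
end

section
/- Let k : ℝ → ℝ be continuously differentiable and strictly positive on an interval containing [x₁, x₂], and let U(x) be the wave-equation kernel matrix U(x) = (k'(x)/(2k(x))) · [−1 + 2ix k(x), exp(+2ix k(x)); exp(−2ix k(x)), −1 − 2ix k(x)]. Then the trace of U(x) equals −k'(x)/k(x) for every x, and consequently det(exp(∫_{x₁}^{x₂} U(x) dx)) = k(x₁)/k(x₂), where exp denotes the matrix exponential of the entrywise-integrated 2×2 complex matrix. -/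
open NormedSpace

noncomputable def entryCLM (i j : Fin 2) : Matrix (Fin 2) (Fin 2) ℂ →L[ℝ] ℂ :=
  letI : NormedRing (Matrix (Fin 2) (Fin 2) ℂ) := Matrix.linftyOpNormedRing
  letI : NormedAlgebra ℝ (Matrix (Fin 2) (Fin 2) ℂ) := Matrix.linftyOpNormedAlgebra
  LinearMap.toContinuousLinearMap
    { toFun := fun M => M i j, map_add' := fun _ _ => rfl, map_smul' := fun _ _ => rfl }

theorem my_det_exp (A : Matrix (Fin 2) (Fin 2) ℂ) :
    (NormedSpace.exp A).det = Complex.exp A.trace := by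
  letI : NormedRing (Matrix (Fin 2) (Fin 2) ℂ) := Matrix.linftyOpNormedRing
  letI : NormedAlgebra ℝ (Matrix (Fin 2) (Fin 2) ℂ) := Matrix.linftyOpNormedAlgebra
  set E : ℝ → Matrix (Fin 2) (Fin 2) ℂ := fun t => exp (t • A) with hE
  have hEderiv : ∀ t : ℝ, HasDerivAt E (A * E t) t := fun t =>
    hasDerivAt_exp_smul_const' (𝕂 := ℝ) A t
  have hentry : ∀ (i j : Fin 2) (t : ℝ),
      HasDerivAt (fun t => E t i j) ((A * E t) i j) t := fun i j t => by
    have := (entryCLM i j).hasFDerivAt.comp_hasDerivAt t (hEderiv t)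
    exact this
  have hg : ∀ t : ℝ, HasDerivAt (fun t => (E t).det) (A.trace * (E t).det) t := by
    intro t
    have h :=
      (((hentry 0 0 t).mul (hentry 1 1 t)).sub ((hentry 0 1 t).mul (hentry 1 0 t)))
    have hfun : (fun t => E t 0 0 * E t 1 1 - E t 0 1 * E t 1 0) = fun t => (E t).det := by
      funext s; rw [Matrix.det_fin_two]
    rw [show (((fun t => E t 0 0) * fun t => E t 1 1) - (fun t => E t 0 1) * fun t => E t 1 0) = fun t => (E t).det from hfun] at h
    refine h.congr_deriv ?_
    simp only [Matrix.mul_apply, Fin.sum_univ_two, Matrix.trace_fin_two, Matrix.det_fin_two]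
    ring
  have hh : ∀ t : ℝ,
      HasDerivAt (fun t : ℝ => Complex.exp (-(A.trace * t)) * (E t).det) 0 t := by
    intro t
    have h1 : HasDerivAt (fun t : ℝ => ((t : ℂ))) 1 t := by
      exact Complex.ofRealCLM.hasDerivAt (x := t)
    have h2 : HasDerivAt (fun t : ℝ => -(A.trace * (t : ℂ))) (-A.trace) t := by
      have := (h1.const_mul A.trace).neg; rw [mul_one] at this; exact this
    have h3 := h2.cexp
    have h4 := h3.mul (hg t)
    refine h4.congr_deriv ?_
    ring
  have hconst : ∀ s t : ℝ,
      Complex.exp (-(A.trace * s)) * (E s).det = Complex.exp (-(A.trace * t)) * (E t).det := by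
    intro s t
    exact is_const_of_deriv_eq_zero (fun u => (hh u).differentiableAt)
      (fun u => (hh u).deriv) s t
  have h10 := hconst 1 0
  have hE0 : E 0 = 1 := by simp [hE, exp_zero]
  have hE1 : E 1 = exp A := by
    rw [hE]
    simp only [one_smul]
  rw [hE0, hE1] at h10
  simp only [Matrix.det_one, Complex.ofReal_one, Complex.ofReal_zero, mul_one, mul_zero,
    neg_zero, Complex.exp_zero] at h10
  have hne : Complex.exp (-A.trace) ≠ 0 := Complex.exp_ne_zero _
  field_simp [Complex.exp_neg] at h10
  rw [Complex.exp_neg] at h10; exact ((inv_mul_eq_one₀ (Complex.exp_ne_zero _)).mp h10).symm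

/-- For the wave-equation kernel matrix `U(x)`, the trace of `U(x)`
equals `−k'(x)/k(x)`, and consequently the determinant of the matrix exponential of
the entrywise integral `∫_{x₁}^{x₂} U(x) dx` equals `k(x₁)/k(x₂)`. -/
theorem wave_equation_det_exp_integral_kernel
    (k : ℝ → ℝ) (x₁ x₂ : ℝ) (hx : x₁ ≤ x₂)
    (J : Set ℝ) (hJ : IsOpen J) (hJI : Set.Icc x₁ x₂ ⊆ J)
    (hk : ContDiffOn ℝ 1 k J) (hkpos : ∀ x ∈ J, 0 < k x)
    (U : ℝ → Matrix (Fin 2) (Fin 2) ℂ)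
    (hU : ∀ x, U x =
      ((deriv k x : ℝ) / (2 * k x) : ℝ) •
        !![-1 + 2 * Complex.I * (x : ℂ) * (k x : ℂ),
             Complex.exp (2 * Complex.I * (x : ℂ) * (k x : ℂ));
           Complex.exp (-(2 * Complex.I * (x : ℂ) * (k x : ℂ))),
             -1 - 2 * Complex.I * (x : ℂ) * (k x : ℂ)]) :
    (∀ x ∈ J, (U x).trace = -(((deriv k x : ℝ) / k x : ℝ) : ℂ)) ∧
    (NormedSpace.exp
        (Matrix.of fun i j : Fin 2 => ∫ x in x₁..x₂, U x i j)).det =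
      ((k x₁ : ℂ) / (k x₂ : ℂ)) := by
  -- entries of U
  have hU00 : ∀ x, U x 0 0 =
      (((deriv k x) / (2 * k x) : ℝ) : ℂ) * (-1 + 2 * Complex.I * (x : ℂ) * (k x : ℂ)) := by
    intro x
    rw [hU]
    simp [Matrix.smul_apply, Complex.real_smul]
    try push_cast
    try ring
  have hU11 : ∀ x, U x 1 1 =
      (((deriv k x) / (2 * k x) : ℝ) : ℂ) * (-1 - 2 * Complex.I * (x : ℂ) * (k x : ℂ)) := by
    intro x
    rw [hU]
    simp [Matrix.smul_apply, Complex.real_smul]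
    try push_cast
    try ring
  -- diagonal sum
  have key : ∀ x, U x 0 0 + U x 1 1 = -(((deriv k x / k x : ℝ)) : ℂ) := by
    intro x
    have hr : (deriv k x / k x : ℝ) = 2 * (deriv k x / (2 * k x)) := by
      rcases eq_or_ne (k x) 0 with h | h
      · simp [h]
      · field_simp
    rw [hU00, hU11, hr]
    push_cast
    ring
  constructor
  · intro x hxJ
    rw [Matrix.trace_fin_two, key]
  -- continuity facts
  have hkc : ContinuousOn k (Set.Icc x₁ x₂) := (hk.continuousOn).mono hJI
  have hd : ContinuousOn (deriv k) (Set.Icc x₁ x₂) :=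
    (hk.continuousOn_deriv_of_isOpen hJ le_rfl).mono hJI
  have hknz : ∀ x ∈ Set.Icc x₁ x₂, (2 : ℝ) * k x ≠ 0 := fun x hxm => by
    have := hkpos x (hJI hxm); positivity
  have hcoef : ContinuousOn (fun x => (((deriv k x) / (2 * k x) : ℝ) : ℂ)) (Set.Icc x₁ x₂) :=
    Complex.continuous_ofReal.comp_continuousOn (hd.div (continuousOn_const.mul hkc) hknz)
  have hw : ContinuousOn (fun x : ℝ => 2 * Complex.I * (x : ℂ) * ((k x : ℝ) : ℂ))
      (Set.Icc x₁ x₂) :=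
    (continuousOn_const.mul Complex.continuous_ofReal.continuousOn).mul
      (Complex.continuous_ofReal.comp_continuousOn hkc)
  have hI00 : IntervalIntegrable (fun x => U x 0 0) MeasureTheory.volume x₁ x₂ := by
    have hc : ContinuousOn (fun x => U x 0 0) (Set.Icc x₁ x₂) :=
      (hcoef.mul (continuousOn_const.add hw)).congr fun x _ => hU00 x
    rw [← Set.uIcc_of_le hx] at hc
    exact hc.intervalIntegrable
  have hI11 : IntervalIntegrable (fun x => U x 1 1) MeasureTheory.volume x₁ x₂ := by
    have hc : ContinuousOn (fun x => U x 1 1) (Set.Icc x₁ x₂) :=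
      (hcoef.mul (continuousOn_const.sub hw)).congr fun x _ => hU11 x
    rw [← Set.uIcc_of_le hx] at hc
    exact hc.intervalIntegrable
  -- FTC
  have hlog : (∫ x in x₁..x₂, deriv k x / k x) = Real.log (k x₂) - Real.log (k x₁) := by
    apply intervalIntegral.integral_eq_sub_of_hasDerivAt
    · intro x hxm
      rw [Set.uIcc_of_le hx] at hxm
      have hxJ : x ∈ J := hJI hxm
      have hdiff : HasDerivAt k (deriv k x) x :=
        ((hk.differentiableOn one_ne_zero).differentiableAt (hJ.mem_nhds hxJ)).hasDerivAt
      exact hdiff.log (hkpos x hxJ).ne'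
    · have hc : ContinuousOn (fun x => deriv k x / k x) (Set.Icc x₁ x₂) :=
        hd.div hkc fun x hxm => (hkpos x (hJI hxm)).ne'
      rw [← Set.uIcc_of_le hx] at hc
      exact hc.intervalIntegrable
  -- trace of the integrated matrix
  have htr : (Matrix.of fun i j : Fin 2 => ∫ x in x₁..x₂, U x i j).trace =
      ((Real.log (k x₁) - Real.log (k x₂) : ℝ) : ℂ) := by
    rw [Matrix.trace_fin_two]
    show (∫ x in x₁..x₂, U x 0 0) + (∫ x in x₁..x₂, U x 1 1) = _
    rw [← intervalIntegral.integral_add hI00 hI11,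
      intervalIntegral.integral_congr (g := fun x => -(((deriv k x / k x : ℝ)) : ℂ))
        (fun x _ => key x),
      intervalIntegral.integral_neg, intervalIntegral.integral_ofReal, hlog]
    push_cast
    ring
  rw [my_det_exp, htr]
  have h1 : (0 : ℝ) < k x₁ := hkpos x₁ (hJI ⟨le_refl _, hx⟩)
  have h2 : (0 : ℝ) < k x₂ := hkpos x₂ (hJI ⟨hx, le_refl _⟩)
  rw [Complex.ofReal_sub, Complex.exp_sub, ← Complex.ofReal_exp, ← Complex.ofReal_exp,
    Real.exp_log h1, Real.exp_log h2]
end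

section
/- Let k : ℝ → ℝ be differentiable with k(x) ≠ 0, restricted to x > 0. For the basis functions A(x;k) = x^{+k} and B(x;k) = x^{−k} (real powers of x > 0) of the Euler–Cauchy equation, the Wronskian is W(x; k(x)) = −2k(x)/x, and the kernel matrix U(x) built from A, B, k equals −(k'(x)/(2k(x))) times the 2×2 matrix with entries [1 + 2k(x)·ln x, −x^{−2k(x)}; −x^{2k(x)}, 1 − 2k(x)·ln x]. -/
/-- Partial derivative in `x` of a real basis function `F(x;k)`. -/
noncomputable def pdxR (F : ℝ → ℝ → ℝ) (x k : ℝ) : ℝ := deriv (fun x' => F x' k) x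

/-- Partial derivative in `k` of a real basis function `F(x;k)`. -/
noncomputable def pdkR (F : ℝ → ℝ → ℝ) (x k : ℝ) : ℝ := deriv (fun k' => F x k') k

/-- Mixed partial derivative: the `k`-derivative of the `x`-derivative of `F(x;k)`. -/
noncomputable def pdxkR (F : ℝ → ℝ → ℝ) (x k : ℝ) : ℝ := deriv (fun k' => pdxR F x k') k

/-- The Wronskian `W(x;k) = A ∂ₓB − ∂ₓA B` of the real basis functions. -/
noncomputable def wronR (A B : ℝ → ℝ → ℝ) (x k : ℝ) : ℝ :=
  A x k * pdxR B x k - pdxR A x k * B x k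

/-- Kernel matrix entry `u₁₁ = k'(∂ₓₖA·B − ∂ₖA·∂ₓB)/W`, evaluated at `(x, k(x))`. -/
noncomputable def u11R (A B : ℝ → ℝ → ℝ) (k : ℝ → ℝ) (x : ℝ) : ℝ :=
  deriv k x * (pdxkR A x (k x) * B x (k x) - pdkR A x (k x) * pdxR B x (k x)) /
    wronR A B x (k x)

/-- Kernel matrix entry `u₁₂ = k'(∂ₓₖB·B − ∂ₖB·∂ₓB)/W`, evaluated at `(x, k(x))`. -/
noncomputable def u12R (A B : ℝ → ℝ → ℝ) (k : ℝ → ℝ) (x : ℝ) : ℝ :=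
  deriv k x * (pdxkR B x (k x) * B x (k x) - pdkR B x (k x) * pdxR B x (k x)) /
    wronR A B x (k x)

/-- Kernel matrix entry `u₂₁ = k'(∂ₖA·∂ₓA − ∂ₓₖA·A)/W`, evaluated at `(x, k(x))`. -/
noncomputable def u21R (A B : ℝ → ℝ → ℝ) (k : ℝ → ℝ) (x : ℝ) : ℝ :=
  deriv k x * (pdkR A x (k x) * pdxR A x (k x) - pdxkR A x (k x) * A x (k x)) /
    wronR A B x (k x)

/-- Kernel matrix entry `u₂₂ = k'(∂ₓA·∂ₖB − A·∂ₓₖB)/W`, evaluated at `(x, k(x))`. -/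
noncomputable def u22R (A B : ℝ → ℝ → ℝ) (k : ℝ → ℝ) (x : ℝ) : ℝ :=
  deriv k x * (pdxR A x (k x) * pdkR B x (k x) - A x (k x) * pdxkR B x (k x)) /
    wronR A B x (k x)

section helpers

lemma pdx_pow {x : ℝ} (hx : 0 < x) (c : ℝ) : pdxR (fun x κ : ℝ => x ^ κ) x c = c * x ^ (c - 1) :=
  (Real.hasDerivAt_rpow_const (Or.inl hx.ne')).deriv

lemma pdx_pow_neg {x : ℝ} (hx : 0 < x) (c : ℝ) : pdxR (fun x κ : ℝ => x ^ (-κ)) x c = -c * x ^ (-c - 1) :=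
  (Real.hasDerivAt_rpow_const (p := -c) (Or.inl hx.ne')).deriv

lemma pdk_pow {x : ℝ} (hx : 0 < x) (c : ℝ) : pdkR (fun x κ : ℝ => x ^ κ) x c = x ^ c * Real.log x :=
  (Real.hasStrictDerivAt_const_rpow hx c).hasDerivAt.deriv

lemma pdk_pow_neg {x : ℝ} (hx : 0 < x) (c : ℝ) :
    pdkR (fun x κ : ℝ => x ^ (-κ)) x c = -(x ^ (-c) * Real.log x) := by
  have h : HasDerivAt (fun κ : ℝ => x ^ (-κ)) (x ^ (-c) * Real.log x * (-1)) c :=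
    (Real.hasStrictDerivAt_const_rpow hx (-c)).hasDerivAt.comp c (hasDerivAt_neg c)
  simpa [pdkR] using h.deriv

lemma pdxk_pow {x : ℝ} (hx : 0 < x) (c : ℝ) :
    pdxkR (fun x κ : ℝ => x ^ κ) x c
      = x ^ (c - 1) + c * (x ^ (c - 1) * Real.log x) := by
  have hfun : (fun κ : ℝ => pdxR (fun x κ : ℝ => x ^ κ) x κ)
      = fun κ : ℝ => κ * x ^ (κ - 1) := funext fun κ => pdx_pow hx κ
  have hin : HasDerivAt (fun κ : ℝ => x ^ (κ - 1)) (x ^ (c - 1) * Real.log x * 1) c :=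
    (Real.hasStrictDerivAt_const_rpow hx (c - 1)).hasDerivAt.comp c
      ((hasDerivAt_id c).sub_const 1)
  have h : HasDerivAt (fun κ : ℝ => κ * x ^ (κ - 1))
      (1 * x ^ (c - 1) + c * (x ^ (c - 1) * Real.log x * 1)) c :=
    (hasDerivAt_id c).mul hin
  rw [pdxkR, hfun]
  simpa using h.deriv

lemma pdxk_pow_neg {x : ℝ} (hx : 0 < x) (c : ℝ) :
    pdxkR (fun x κ : ℝ => x ^ (-κ)) x c
      = -(x ^ (-c - 1)) + c * (x ^ (-c - 1) * Real.log x) := by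
  have hfun : (fun κ : ℝ => pdxR (fun x κ : ℝ => x ^ (-κ)) x κ)
      = fun κ : ℝ => -κ * x ^ (-κ - 1) := funext fun κ => pdx_pow_neg hx κ
  have hin : HasDerivAt (fun κ : ℝ => x ^ (-κ - 1))
      (x ^ (-c - 1) * Real.log x * (-1)) c :=
    (Real.hasStrictDerivAt_const_rpow hx (-c - 1)).hasDerivAt.comp c
      ((hasDerivAt_neg c).sub_const 1)
  have h : HasDerivAt (fun κ : ℝ => -κ * x ^ (-κ - 1))
      ((-1) * x ^ (-c - 1) + (-c) * (x ^ (-c - 1) * Real.log x * (-1))) c :=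
    ((hasDerivAt_id c).neg).mul hin
  rw [pdxkR, hfun]
  have := h.deriv
  rw [this]; ring

end helpers

/-- For the power basis `A(x;k) = x^{+k}`, `B(x;k) = x^{−k}` (real powers,
`x > 0`) of the Euler–Cauchy equation, the Wronskian along `(x, k(x))` is `−2k(x)/x`
and the kernel matrix equals
`−(k'(x)/(2k(x)))·[1 + 2k ln x, −x^{−2k}; −x^{2k}, 1 − 2k ln x]`. -/
theorem euler_cauchy_kernel_matrix
    (k : ℝ → ℝ) (hk : Differentiable ℝ k) (x : ℝ) (hx : 0 < x) (hkx : k x ≠ 0)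
    (A B : ℝ → ℝ → ℝ)
    (hAdef : A = fun x κ : ℝ => x ^ κ)
    (hBdef : B = fun x κ : ℝ => x ^ (-κ)) :
    wronR A B x (k x) = -(2 * k x) / x ∧
    !![u11R A B k x, u12R A B k x; u21R A B k x, u22R A B k x] =
      (-(deriv k x / (2 * k x))) •
        !![1 + 2 * k x * Real.log x, -(x ^ (-(2 * k x)));
           -(x ^ (2 * k x)), 1 - 2 * k x * Real.log x] := by
  subst hAdef hBdef
  set K := k x with hK
  set L := Real.log x with hL
  set d := deriv k x with hd
  have hxne : x ≠ 0 := hx.ne'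
  have hT : x ^ K ≠ 0 := (Real.rpow_pos_of_pos hx K).ne'
  -- rpow rewrites
  have e1 : x ^ (K - 1) = x ^ K / x := by
    rw [Real.rpow_sub hx, Real.rpow_one]
  have e2 : x ^ (-K) = (x ^ K)⁻¹ := Real.rpow_neg hx.le K
  have e3 : x ^ (-K - 1) = (x ^ K)⁻¹ / x := by
    rw [Real.rpow_sub hx, Real.rpow_one, e2]
  have e4 : x ^ (2 * K) = x ^ K * x ^ K := by
    rw [two_mul, Real.rpow_add hx]
  have e5 : x ^ (-(2 * K)) = (x ^ K * x ^ K)⁻¹ := by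
    rw [Real.rpow_neg hx.le, e4]
  have hw : wronR (fun x κ : ℝ => x ^ κ) (fun x κ : ℝ => x ^ (-κ)) x K = -(2 * K) / x := by
    rw [wronR, pdx_pow hx, pdx_pow_neg hx, e1, e2, e3]
    field_simp
    ring
  refine ⟨hw, ?_⟩
  have h11 : u11R (fun x κ : ℝ => x ^ κ) (fun x κ : ℝ => x ^ (-κ)) k x
      = -(d / (2 * K)) * (1 + 2 * K * L) := by
    rw [u11R, ← hK, ← hd, hw, pdxk_pow hx, pdk_pow hx, pdx_pow_neg hx, e1, e2, e3, ← hL]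
    field_simp
    ring
  have h12 : u12R (fun x κ : ℝ => x ^ κ) (fun x κ : ℝ => x ^ (-κ)) k x
      = -(d / (2 * K)) * (-(x ^ (-(2 * K)))) := by
    rw [u12R, ← hK, ← hd, hw, pdxk_pow_neg hx, pdk_pow_neg hx, pdx_pow_neg hx, e2, e3, e5, ← hL]
    field_simp
    ring
  have h21 : u21R (fun x κ : ℝ => x ^ κ) (fun x κ : ℝ => x ^ (-κ)) k x
      = -(d / (2 * K)) * (-(x ^ (2 * K))) := by
    rw [u21R, ← hK, ← hd, hw, pdxk_pow hx, pdk_pow hx, pdx_pow hx, e1, e4, ← hL]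
    field_simp
    ring
  have h22 : u22R (fun x κ : ℝ => x ^ κ) (fun x κ : ℝ => x ^ (-κ)) k x
      = -(d / (2 * K)) * (1 - 2 * K * L) := by
    rw [u22R, ← hK, ← hd, hw, pdxk_pow_neg hx, pdk_pow_neg hx, pdx_pow hx, e1, e2, e3, ← hL]
    field_simp
    ring
  ext i j
  fin_cases i <;> fin_cases j <;>
    simp [h11, h12, h21, h22, ← hK, ← hd, ← hL]
end

section
/- Let k : ℝ → ℝ be differentiable with k(x) ≠ 0 on an interval I ⊆ (0, ∞), and let a, b : ℝ → ℝ be differentiable on I satisfying a'(x) = −(k'(x)/(2k(x)))[(1 + 2k(x)·ln x)·a(x) − x^{−2k(x)}·b(x)] and b'(x) = −(k'(x)/(2k(x)))[−x^{2k(x)}·a(x) + (1 − 2k(x)·ln x)·b(x)]. Then the function ψ(x) = a(x)·x^{k(x)} + b(x)·x^{−k(x)} satisfies the extended Euler–Cauchy equation x²ψ''(x) + xψ'(x) − k(x)²ψ(x) = 0 on I. -/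
lemma psi_deriv (k a b : ℝ → ℝ) (x : ℝ) (hx : 0 < x) (hk0 : k x ≠ 0)
    (hkx : HasDerivAt k (deriv k x) x)
    (hax : HasDerivAt a
      (-(deriv k x / (2 * k x)) *
        ((1 + 2 * k x * Real.log x) * a x - x ^ (-(2 * k x)) * b x)) x)
    (hbx : HasDerivAt b
      (-(deriv k x / (2 * k x)) *
        (-(x ^ (2 * k x)) * a x + (1 - 2 * k x * Real.log x) * b x)) x) :
    HasDerivAt (fun y => a y * y ^ k y + b y * y ^ (-(k y)))
      (k x / x * (a x * x ^ k x - b x * x ^ (-(k x)))) x := by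
  have h1 : HasDerivAt (fun y : ℝ => y ^ k y)
      (1 * k x * x ^ (k x - 1) + deriv k x * x ^ k x * Real.log x) x :=
    (hasDerivAt_id x).rpow hkx hx
  have h2 : HasDerivAt (fun y : ℝ => y ^ (-(k y)))
      (1 * (-(k x)) * x ^ (-(k x) - 1) + (-(deriv k x)) * x ^ (-(k x)) * Real.log x) x :=
    (hasDerivAt_id x).rpow hkx.neg hx
  have total := (hax.mul h1).add (hbx.mul h2)
  refine total.congr_deriv ?_
  have hP : x ^ k x ≠ 0 := (Real.rpow_pos_of_pos hx _).ne'
  rw [show -(2 * k x) = -(k x) + -(k x) by ring, show (2:ℝ) * k x = k x + k x by ring]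
  simp only [Real.rpow_sub hx, Real.rpow_one, Real.rpow_add hx, Real.rpow_neg hx.le]
  field_simp [hk0, hP, hx.ne']
  ring

/-- If the envelope coefficients `a, b` satisfy the differential
transfer matrix system of the Euler–Cauchy equation with power basis `x^{±k(x)}`,
then `ψ(x) = a(x)x^{k(x)} + b(x)x^{−k(x)}` solves the extended Euler–Cauchy equation
`x²ψ'' + xψ' − k(x)²ψ = 0` on `I ⊆ (0,∞)`. -/
theorem euler_cauchy_DTMM_solution
    (k : ℝ → ℝ) (hk : Differentiable ℝ k)
    (I : Set ℝ) (hI : IsOpen I) (hIpos : I ⊆ Set.Ioi (0 : ℝ))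
    (hk0 : ∀ x ∈ I, k x ≠ 0)
    (a b : ℝ → ℝ)
    (ha : ∀ x ∈ I, HasDerivAt a
      (-(deriv k x / (2 * k x)) *
        ((1 + 2 * k x * Real.log x) * a x - x ^ (-(2 * k x)) * b x)) x)
    (hb : ∀ x ∈ I, HasDerivAt b
      (-(deriv k x / (2 * k x)) *
        (-(x ^ (2 * k x)) * a x + (1 - 2 * k x * Real.log x) * b x)) x) :
    ∀ x ∈ I,
      x ^ 2 * deriv (deriv (fun y => a y * y ^ k y + b y * y ^ (-(k y)))) x +
      x * deriv (fun y => a y * y ^ k y + b y * y ^ (-(k y))) x -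
      (k x) ^ 2 * (a x * x ^ k x + b x * x ^ (-(k x))) = 0 := by
  intro x hx
  have hx0 : (0:ℝ) < x := hIpos hx
  set ψ : ℝ → ℝ := fun y => a y * y ^ k y + b y * y ^ (-(k y)) with hψdef
  set D1 : ℝ → ℝ := fun y => k y / y * (a y * y ^ k y - b y * y ^ (-(k y))) with hD1def
  have hD1 : ∀ y ∈ I, HasDerivAt ψ (D1 y) y := fun y hy =>
    psi_deriv k a b y (hIpos hy) (hk0 y hy) (hk y).hasDerivAt (ha y hy) (hb y hy)
  -- deriv ψ equals D1 near x
  have hEv : deriv ψ =ᶠ[nhds x] D1 :=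
    (hI.eventually_mem hx).mono fun y hy => (hD1 y hy).deriv
  have hderivψ : deriv ψ x = D1 x := (hD1 x hx).deriv
  -- second derivative : D1 has a derivative at x
  have hkx := (hk x).hasDerivAt
  have h1 : HasDerivAt (fun y : ℝ => y ^ k y)
      (1 * k x * x ^ (k x - 1) + deriv k x * x ^ k x * Real.log x) x :=
    (hasDerivAt_id x).rpow hkx hx0
  have h2 : HasDerivAt (fun y : ℝ => y ^ (-(k y)))
      (1 * (-(k x)) * x ^ (-(k x) - 1) + (-(deriv k x)) * x ^ (-(k x)) * Real.log x) x :=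
    (hasDerivAt_id x).rpow hkx.neg hx0
  have hq : HasDerivAt (fun y : ℝ => k y / y)
      ((deriv k x * x - k x * 1) / x ^ 2) x := hkx.div (hasDerivAt_id x) hx0.ne'
  have hr : HasDerivAt (fun y : ℝ => a y * y ^ k y - b y * y ^ (-(k y)))
      ((-(deriv k x / (2 * k x)) *
        ((1 + 2 * k x * Real.log x) * a x - x ^ (-(2 * k x)) * b x)) * x ^ k x +
        a x * (1 * k x * x ^ (k x - 1) + deriv k x * x ^ k x * Real.log x) -
       ((-(deriv k x / (2 * k x)) *
        (-(x ^ (2 * k x)) * a x + (1 - 2 * k x * Real.log x) * b x)) * x ^ (-(k x)) +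
        b x * (1 * (-(k x)) * x ^ (-(k x) - 1) + (-(deriv k x)) * x ^ (-(k x)) * Real.log x))) x :=
    ((ha x hx).mul h1).sub ((hb x hx).mul h2)
  have hP : x ^ k x ≠ 0 := (Real.rpow_pos_of_pos hx0 _).ne'
  have h2k : k x + k x ≠ 0 := fun h => hk0 x hx (by linarith)
  have hD2 : HasDerivAt D1
      (k x / x ^ 2 * ((k x - 1) * a x * x ^ k x + (k x + 1) * b x * x ^ (-(k x)))) x := by
    refine (hq.mul hr).congr_deriv ?_
    rw [show -(2 * k x) = -(k x) + -(k x) by ring, show (2:ℝ) * k x = k x + k x by ring]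
    simp only [Real.rpow_sub hx0, Real.rpow_one, Real.rpow_add hx0, Real.rpow_neg hx0.le]
    field_simp [hk0 x hx, hP, hx0.ne', h2k]
    ring
  have hderiv2 := hEv.deriv_eq.trans hD2.deriv
  rw [hderiv2, hderivψ, hD1def]
  simp only [Real.rpow_neg hx0.le]
  field_simp [hk0 x hx, hP, hx0.ne']
  ring
end
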